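/- Let (ε_k) in ℝᵖ satisfy ε_k = E_k ε_{k−1} − E_k(Δν_k + c_k) + δ_k + c_k + d_k with ‖E_k‖ ≤ b̄' < 1, ‖Δν_k‖ ≤ Δν̄, ‖c_k‖ ≤ c̄, ‖δ_k + d_k‖ ≤ δ̄ + d̄ for all k. Then (ε_k) is bounded and limsup_k ‖ε_k‖ ≤ (Δν̄·b̄' + δ̄ + d̄ + (b̄' + 1)·c̄)/(1 − b̄'). -/
import Mathlib


open Matrix Filter

/-- Operator 2-norm of a real matrix, viewed as a linear map between Euclidean spaces. -/
noncomputable def opNorm {p m : ℕ} (M : Matrix (Fin p) (Fin m) ℝ) : ℝ :=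
  ‖LinearMap.toContinuousLinearMap (Matrix.toEuclideanLin M)‖

/-- A matrix acting on Euclidean space. -/
noncomputable def mulVecE {p m : ℕ} (M : Matrix (Fin p) (Fin m) ℝ)
    (x : EuclideanSpace ℝ (Fin m)) : EuclideanSpace ℝ (Fin p) :=
  (WithLp.equiv 2 (Fin p → ℝ)).symm (M.mulVec (WithLp.equiv 2 (Fin m → ℝ) x))

lemma mulVecE_norm_le {p m : ℕ} (M : Matrix (Fin p) (Fin m) ℝ)
    (x : EuclideanSpace ℝ (Fin m)) : ‖mulVecE M x‖ ≤ opNorm M * ‖x‖ := by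
  have : mulVecE M x = LinearMap.toContinuousLinearMap (Matrix.toEuclideanLin M) x := rfl
  rw [this]
  exact (LinearMap.toContinuousLinearMap (Matrix.toEuclideanLin M)).le_opNorm x

theorem qp_allocation_residual_bound
    {p : ℕ} (ε Δν c δ d : ℕ → EuclideanSpace ℝ (Fin p))
    (E : ℕ → Matrix (Fin p) (Fin p) ℝ)
    (bbar Δνbar cbar δbar dbar : ℝ) (hb : bbar < 1)
    (hE : ∀ k : ℕ, opNorm (E (k + 1)) ≤ bbar)
    (hΔν : ∀ k : ℕ, ‖Δν (k + 1)‖ ≤ Δνbar)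
    (hc : ∀ k : ℕ, ‖c (k + 1)‖ ≤ cbar)
    (hδd : ∀ k : ℕ, ‖δ (k + 1) + d (k + 1)‖ ≤ δbar + dbar)
    (hrec : ∀ k : ℕ, ε (k + 1)
      = mulVecE (E (k + 1)) (ε k) - mulVecE (E (k + 1)) (Δν (k + 1) + c (k + 1))
        + δ (k + 1) + c (k + 1) + d (k + 1)) :
    (∃ M : ℝ, ∀ k : ℕ, ‖ε k‖ ≤ M) ∧
    limsup (fun k => ‖ε k‖) atTop
      ≤ (Δνbar * bbar + δbar + dbar + (bbar + 1) * cbar) / (1 - bbar) := by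
  set B : ℝ := Δνbar * bbar + δbar + dbar + (bbar + 1) * cbar with hB
  set S : ℝ := B / (1 - bbar) with hS
  have hb0 : 0 ≤ bbar := le_trans (norm_nonneg _) (hE 0)
  have h1b : 0 < 1 - bbar := by linarith
  -- step inequality
  have step : ∀ k : ℕ, ‖ε (k + 1)‖ ≤ bbar * ‖ε k‖ + B := by
    intro k
    have hΔνc : ‖Δν (k + 1) + c (k + 1)‖ ≤ Δνbar + cbar :=
      le_trans (norm_add_le _ _) (add_le_add (hΔν k) (hc k))
    have h1 : ‖mulVecE (E (k + 1)) (ε k)‖ ≤ bbar * ‖ε k‖ :=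
      le_trans (mulVecE_norm_le _ _)
        (mul_le_mul_of_nonneg_right (hE k) (norm_nonneg _))
    have h2 : ‖mulVecE (E (k + 1)) (Δν (k + 1) + c (k + 1))‖ ≤ bbar * (Δνbar + cbar) :=
      le_trans (mulVecE_norm_le _ _)
        (mul_le_mul (hE k) hΔνc (norm_nonneg _) hb0)
    have heq : ε (k + 1) = (mulVecE (E (k + 1)) (ε k) - mulVecE (E (k + 1)) (Δν (k + 1) + c (k + 1)))
        + (δ (k + 1) + d (k + 1)) + c (k + 1) := by
      rw [hrec k]; abel
    calc ‖ε (k + 1)‖ ≤ ‖mulVecE (E (k + 1)) (ε k) - mulVecE (E (k + 1)) (Δν (k + 1) + c (k + 1))‖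
          + ‖δ (k + 1) + d (k + 1)‖ + ‖c (k + 1)‖ := by
          rw [heq]; exact le_trans (norm_add_le _ _) (by gcongr; exact norm_add_le _ _)
      _ ≤ (bbar * ‖ε k‖ + bbar * (Δνbar + cbar)) + (δbar + dbar) + cbar := by
          gcongr
          · exact le_trans (norm_sub_le _ _) (add_le_add h1 h2)
          · exact hδd k
          · exact hc k
      _ = bbar * ‖ε k‖ + B := by rw [hB]; ring
  -- key bound by induction
  have key : ∀ k : ℕ, ‖ε k‖ ≤ bbar ^ k * ‖ε 0‖ + S := by
    intro k
    induction k with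
    | zero =>
      simp only [pow_zero, one_mul]
      have : 0 ≤ S := div_nonneg (by
        have h0 : 0 ≤ Δνbar := le_trans (norm_nonneg _) (hΔν 0)
        have h1 : 0 ≤ cbar := le_trans (norm_nonneg _) (hc 0)
        have h2 : 0 ≤ δbar + dbar := le_trans (norm_nonneg _) (hδd 0)
        nlinarith [mul_nonneg h0 hb0, mul_nonneg (by linarith : (0:ℝ) ≤ bbar + 1) h1]) h1b.le
      linarith
    | succ k ih =>
      have := step k
      have h3 : bbar * (bbar ^ k * ‖ε 0‖ + S) + B = bbar ^ (k + 1) * ‖ε 0‖ + S := by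
        rw [hS]; field_simp; ring
      calc ‖ε (k + 1)‖ ≤ bbar * ‖ε k‖ + B := this
        _ ≤ bbar * (bbar ^ k * ‖ε 0‖ + S) + B := by gcongr
        _ = bbar ^ (k + 1) * ‖ε 0‖ + S := h3
  have hbound : ∀ k : ℕ, ‖ε k‖ ≤ ‖ε 0‖ + S := by
    intro k
    refine le_trans (key k) ?_
    have hpow : bbar ^ k ≤ 1 := pow_le_one₀ hb0 hb.le
    have hp0 : 0 ≤ bbar ^ k := pow_nonneg hb0 k
    nlinarith [norm_nonneg (ε 0)]
  constructor
  · exact ⟨‖ε 0‖ + S, hbound⟩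
  · have htend : Tendsto (fun k : ℕ => bbar ^ k * ‖ε 0‖ + S) atTop (nhds S) := by
      have : Tendsto (fun k : ℕ => bbar ^ k) atTop (nhds 0) :=
        tendsto_pow_atTop_nhds_zero_of_lt_one hb0 hb
      have := (this.mul_const ‖ε 0‖).add_const S
      simpa using this
    have hco : IsCoboundedUnder (· ≤ ·) atTop (fun k => ‖ε k‖) :=
      (Filter.isBoundedUnder_of (f := atTop) (u := fun k => ‖ε k‖) (r := (· ≥ ·))
        ⟨0, fun k => norm_nonneg _⟩).isCoboundedUnder_le
    have hbd : IsBoundedUnder (· ≤ ·) atTop (fun k : ℕ => bbar ^ k * ‖ε 0‖ + S) :=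
      htend.isBoundedUnder_le
    calc limsup (fun k => ‖ε k‖) atTop
        ≤ limsup (fun k : ℕ => bbar ^ k * ‖ε 0‖ + S) atTop :=
          limsup_le_limsup (Eventually.of_forall key) hco hbd
      _ = S := htend.limsup_eq
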